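/- Let δ > 0 and let G be a finite simple graph with girth greater than 2g and 2|E(G)| ≥ (2+δ)|V(G)|, and suppose the treewidth of G − F is at most k for some edge set F with |F| ≤ ε|E(G)| where ε = δ/(2(2+δ)) and the girth of G is at least 12k/δ. Then G − F has average degree at least 2 + δ/2 and girth at least 3·(4k/δ), hence by the girth-minor lemma G − F has a minor of average degree greater than 2k, contradicting tw(G−F) ≤ k; therefore no such F exists. In particular: any class of graphs with unbounded girth and average degree at least 2 + δ is not fractionally-treewidth-fragile. -/

import Mathlib

open SimpleGraph Finset

/-- `G` has treewidth at most `k`: there is a tree decomposition all of whose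
bags have size at most `k + 1`. -/
def HasTreewidthLE {V : Type} (G : SimpleGraph V) (k : ℕ) : Prop :=
  ∃ (ι : Type) (T : SimpleGraph ι) (B : ι → Finset V),
    T.Connected ∧ T.IsAcyclic ∧
    (∀ v : V, ∃ i, v ∈ B i) ∧
    (∀ u v, G.Adj u v → ∃ i, u ∈ B i ∧ v ∈ B i) ∧
    (∀ (v : V) (i j : ι), v ∈ B i → v ∈ B j →
      ∃ p : T.Walk i j, ∀ x ∈ p.support, v ∈ B x) ∧
    (∀ i, (B i).card ≤ k + 1)

namespace Stmt17

variable {V : Type}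

def LongCycles (G : SimpleGraph V) (N : ℕ) : Prop :=
  ∀ (a : V) (w : G.Walk a a), w.IsCycle → N ≤ w.length

lemma longCycles_of_girth {G : SimpleGraph V} {N : ℕ} (h : (N : ℕ∞) ≤ (G.girth : ℕ∞)) :
    LongCycles G N := by
  intro a w hw
  have h1 : G.egirth ≤ (w.length : ℕ∞) := le_egirth.mp le_rfl a w hw
  have h2 : G.girth ≤ w.length := by
    have := ENat.toNat_le_toNat h1 (by simp)
    simpa [SimpleGraph.girth] using this
  exact le_trans (by exact_mod_cast h) h2

lemma longCycles_deleteEdges {G : SimpleGraph V} {N : ℕ} (h : LongCycles G N)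
    (F : Set (Sym2 V)) : LongCycles (G.deleteEdges F) N := by
  intro a w hw
  have hle : G.deleteEdges F ≤ G := deleteEdges_le _
  have := h a (w.mapLe hle) (hw.mapLe hle)
  simpa using this

lemma longCycles_induce [DecidableEq V] {G : SimpleGraph V} {N : ℕ} (h : LongCycles G N) (s : Set V) :
    LongCycles (G.induce s) N := by
  intro a w hw
  have hinj : Function.Injective (SimpleGraph.Embedding.induce (G := G) s) :=
    (SimpleGraph.Embedding.induce (G := G) s).injective
  have := h _ (w.map (SimpleGraph.Embedding.induce (G := G) s).toHom)
    ((SimpleGraph.Walk.map_isCycle_iff_of_injective hinj).mpr hw)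
  rwa [Walk.length_map] at this

lemma exists_cycle_of_walk [DecidableEq V] {G : SimpleGraph V} {u v : V} (h : G.Adj u v) (p : G.Walk v u)
    (he : s(u, v) ∉ p.edges) : ∃ (c : G.Walk u u), c.IsCycle ∧ c.length ≤ p.length + 1 := by
  refine ⟨Walk.cons h (p.toPath : G.Walk v u), ?_, ?_⟩
  · exact Path.cons_isCycle p.toPath h (fun hee => he (Walk.edges_toPath_subset p hee))
  · exact Nat.succ_le_succ (Walk.length_bypass_le p)

lemma edges_end_unique {G : SimpleGraph V} :
    ∀ {u v : V} (p : G.Walk u v), p.IsPath →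
      ∀ {y z : V}, s(v, y) ∈ p.edges → s(v, z) ∈ p.edges → y = z := by
  intro u v p
  induction p with
  | nil => intro _ y z hy; simp at hy
  | @cons a b c hadj q ih =>
    intro hp y z hy hz
    have hq : q.IsPath := hp.of_cons
    have hans : a ∉ q.support := ((Walk.cons_isPath_iff hadj q).mp hp).2
    have hva : c ≠ a := fun hh => hans (hh ▸ Walk.end_mem_support q)
    have hcase : ∀ {y' : V}, s(c, y') ∈ (Walk.cons hadj q).edges →
        (c = b ∧ y' = a) ∨ s(c, y') ∈ q.edges := by
      intro y' hy'
      rw [Walk.edges_cons, List.mem_cons] at hy'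
      rcases hy' with hy' | hy'
      · rw [Sym2.eq_iff] at hy'
        rcases hy' with ⟨h1, h2⟩ | ⟨h1, h2⟩
        · exact absurd h1 hva
        · exact Or.inl ⟨h1, h2⟩
      · exact Or.inr hy'
    rcases hcase hy with ⟨hvb, hya⟩ | hy' <;> rcases hcase hz with ⟨hvb', hza⟩ | hz'
    · rw [hya, hza]
    · exfalso
      subst hvb
      have hnil : q = Walk.nil := Walk.isPath_iff_eq_nil.mp hq
      rw [hnil] at hz'; simp at hz'
    · exfalso
      subst hvb'
      have hnil : q = Walk.nil := Walk.isPath_iff_eq_nil.mp hq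
      rw [hnil] at hy'; simp at hy'
    · exact ih hq hy' hz'

lemma tw_minor {S : Type} (G : SimpleGraph V) (M : SimpleGraph S) (k : ℕ)
    (ρ : V → Option S)
    (hfib : ∀ s, ∃ v, ρ v = some s)
    (hconn : ∀ (s : S) (u v : V), ρ u = some s → ρ v = some s →
      ∃ p : G.Walk u v, ∀ x ∈ p.support, ρ x = some s)
    (hadj : ∀ s t, M.Adj s t → ∃ u v, G.Adj u v ∧ ρ u = some s ∧ ρ v = some t)
    (h : HasTreewidthLE G k) : HasTreewidthLE M k := by
  classical
  obtain ⟨ι, T, Bg, hTc, hTa, hcov, hadjG, hwalk, hcard⟩ := h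
  refine ⟨ι, T, fun i => ((Bg i).image ρ).eraseNone, hTc, hTa, ?_, ?_, ?_, ?_⟩
  · -- cover
    intro s
    obtain ⟨v, hv⟩ := hfib s
    obtain ⟨i, hi⟩ := hcov v
    exact ⟨i, Finset.mem_eraseNone.mpr (Finset.mem_image.mpr ⟨v, hi, hv⟩)⟩
  · -- adjacency
    intro s t hst
    obtain ⟨u, v, huv, hu, hv⟩ := hadj s t hst
    obtain ⟨i, hui, hvi⟩ := hadjG u v huv
    exact ⟨i, Finset.mem_eraseNone.mpr (Finset.mem_image.mpr ⟨u, hui, hu⟩),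
      Finset.mem_eraseNone.mpr (Finset.mem_image.mpr ⟨v, hvi, hv⟩)⟩
  · -- connectivity of bags
    have key : ∀ (s : S) (u w : V) (p : G.Walk u w), (∀ x ∈ p.support, ρ x = some s) →
        ∀ i j, u ∈ Bg i → w ∈ Bg j →
        ∃ q : T.Walk i j, ∀ x ∈ q.support, ∃ y ∈ Bg x, ρ y = some s := by
      intro s u w p
      induction p with
      | nil =>
        intro hsup i j hu hw
        obtain ⟨q, hq⟩ := hwalk _ i j hu hw
        exact ⟨q, fun x hx => ⟨_, hq x hx, hsup _ (by simp)⟩⟩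
      | @cons a b c hadj' p' ih =>
        intro hsup i j hu hw
        obtain ⟨l, hul, hbl⟩ := hadjG _ _ hadj'
        obtain ⟨q1, hq1⟩ := hwalk _ i l hu hul
        obtain ⟨q2, hq2⟩ := ih (fun x hx => hsup x (by simp [hx])) l j hbl hw
        refine ⟨q1.append q2, fun x hx => ?_⟩
        rcases (Walk.mem_support_append_iff _ _).mp hx with h1 | h2
        · exact ⟨_, hq1 x h1, hsup _ (by simp)⟩
        · exact hq2 x h2
    intro s i j hsi hsj
    obtain ⟨u, hu, hρu⟩ := Finset.mem_image.mp (Finset.mem_eraseNone.mp hsi)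
    obtain ⟨v, hv, hρv⟩ := Finset.mem_image.mp (Finset.mem_eraseNone.mp hsj)
    obtain ⟨p, hp⟩ := hconn s u v hρu hρv
    obtain ⟨q, hq⟩ := key s u v p hp i j hu hv
    refine ⟨q, fun x hx => ?_⟩
    obtain ⟨y, hy, hρy⟩ := hq x hx
    exact Finset.mem_eraseNone.mpr (Finset.mem_image.mpr ⟨y, hy, hρy⟩)
  · -- card bound
    intro i
    calc ((Bg i).image ρ).eraseNone.card
        ≤ ((Bg i).image ρ).card := by
          apply Finset.card_le_card_of_injOn some
          · intro x hx; exact Finset.mem_eraseNone.mp hx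
          · intro x _ y _ hxy; exact Option.some_injective _ hxy
      _ ≤ (Bg i).card := Finset.card_image_le
      _ ≤ k + 1 := hcard i

lemma tw_card_edges [Fintype V] [DecidableEq V] (G : SimpleGraph V) [DecidableRel G.Adj]
    {k : ℕ} (h : HasTreewidthLE G k) : G.edgeFinset.card ≤ k * Fintype.card V := by
  classical
  rcases isEmpty_or_nonempty V with hV | hV
  · have he : G.edgeFinset = ∅ := by
      ext e
      refine Sym2.ind (fun x y => ?_) e
      exact isEmptyElim x
    simp [he]
  obtain ⟨ι, T, Bg, hTc, hTa, hcov, hadjG, hwalk, hcard⟩ := h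
  obtain ⟨r⟩ := hTc.nonempty
  have hreach : ∀ i j : ι, T.Reachable i j := fun i j => hTc.preconnected i j
  set dT : ι → ℕ := fun i => T.dist i r with hdTdef
  have hdrop : ∀ {i : ι} (p : T.Walk i r) (x : ι) (hx : x ∈ p.support),
      dT x + (p.takeUntil x hx).length ≤ p.length := by
    intro i p x hx
    have h1 : dT x ≤ (p.dropUntil x hx).length := SimpleGraph.dist_le _
    have h2 : (p.takeUntil x hx).length + (p.dropUntil x hx).length = p.length := by
      have h3 := congrArg Walk.length (Walk.take_spec p hx)
      rw [Walk.length_append] at h3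
      omega
    omega
  have hDne : ∀ v : V, ∃ n : ℕ, ∃ i, v ∈ Bg i ∧ dT i = n := by
    intro v; obtain ⟨i, hi⟩ := hcov v; exact ⟨dT i, i, hi, rfl⟩
  set d : V → ℕ := fun v => sInf {n | ∃ i, v ∈ Bg i ∧ dT i = n} with hddef
  have hgex : ∀ v : V, ∃ i, v ∈ Bg i ∧ dT i = d v := fun v => Nat.sInf_mem (hDne v)
  choose g hg1 hg2 using hgex
  have hmin : ∀ v i, v ∈ Bg i → d v ≤ dT i := fun v i hi => Nat.sInf_le ⟨i, hi, rfl⟩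
  -- main claim
  have claim : ∀ u v, G.Adj u v → d v ≤ d u → v ∈ Bg (g u) := by
    intro u v huv hd
    obtain ⟨b, hub, hvb⟩ := hadjG u v huv
    have build : ∀ z : V, z ∈ Bg b →
        ∃ (p : T.Walk b (g z)) (q : T.Walk (g z) r),
          (∀ x ∈ p.support, z ∈ Bg x) ∧ q.length = d z ∧
          (p.append q).IsPath := by
      intro z hzb
      obtain ⟨w2, hw2⟩ := hwalk z b (g z) hzb (hg1 z)
      set p := (w2.toPath : T.Walk b (g z)) with hpdef
      have hps : ∀ x ∈ p.support, z ∈ Bg x := fun x hx =>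
        hw2 x (Walk.support_bypass_subset w2 hx)
      have hpp : p.IsPath := w2.toPath.2
      obtain ⟨q, hqp, hql⟩ := (hreach (g z) r).exists_path_of_dist
      have hqlen : q.length = d z := by rw [hql]; exact hg2 z
      refine ⟨p, q, hps, hqlen, ?_⟩
      rw [Walk.isPath_def, Walk.support_append]
      have hqnd : (g z :: q.support.tail).Nodup := by
        rw [← Walk.support_eq_cons]; exact (Walk.isPath_def q).mp hqp
      refine List.Nodup.append ((Walk.isPath_def p).mp hpp) (List.nodup_cons.mp hqnd).2 ?_
      intro x hxp hxq
      have hxq' : x ∈ q.support := List.mem_of_mem_tail hxq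
      have hxne : x ≠ g z := by
        intro hh
        exact (List.nodup_cons.mp hqnd).1 (hh ▸ hxq)
      have h1 := hdrop q x hxq'
      have h2 : (q.takeUntil x hxq').length ≠ 0 := fun h0 =>
        hxne (Walk.eq_of_length_eq_zero h0).symm
      have h3 : d z ≤ dT x := hmin z x (hps x hxp)
      omega
    obtain ⟨pv, qv, hpvs, hqvl, hPv⟩ := build v hvb
    obtain ⟨pu, qu, hpus, hqul, hPu⟩ := build u hub
    have hEq : pv.append qv = pu.append qu := by
      have := hTa.path_unique (⟨_, hPv⟩ : T.Path b r) ⟨_, hPu⟩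
      exact congrArg Subtype.val this
    have hgu : g u ∈ (pv.append qv).support := by
      rw [hEq]
      exact (Walk.mem_support_append_iff _ _).mpr (Or.inl (Walk.end_mem_support _))
    rcases (Walk.mem_support_append_iff _ _).mp hgu with h1 | h2
    · exact hpvs _ h1
    · have hh1 := hdrop qv (g u) h2
      have hh2 : dT (g u) = d u := hg2 u
      have h3 : (qv.takeUntil (g u) h2).length = 0 := by omega
      have h4 : g v = g u := Walk.eq_of_length_eq_zero h3
      rw [← h4]; exact hg1 v
  -- counting
  have horient : ∀ e ∈ G.edgeFinset, ∃ p : V × V,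
      e = s(p.1, p.2) ∧ p.2 ∈ (Bg (g p.1)).erase p.1 := by
    intro e
    refine Sym2.ind (fun u v => ?_) e
    intro he
    have huv : G.Adj u v := (G.mem_edgeSet).mp (mem_edgeFinset.mp he)
    rcases le_total (d v) (d u) with hle | hle
    · exact ⟨(u, v), rfl, Finset.mem_erase.mpr ⟨huv.ne', claim u v huv hle⟩⟩
    · exact ⟨(v, u), Sym2.eq_swap.symm, Finset.mem_erase.mpr ⟨huv.ne, claim v u huv.symm hle⟩⟩
  haveI : Nonempty (V × V) := ⟨(hV.some, hV.some)⟩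
  set t : Finset (V × V) := (univ : Finset V).biUnion (fun u => {u} ×ˢ (Bg (g u)).erase u)
    with htdef
  set f : Sym2 V → V × V := fun e =>
    if he : ∃ p : V × V, e = s(p.1, p.2) ∧ p.2 ∈ (Bg (g p.1)).erase p.1 then he.choose
    else Classical.arbitrary _ with hfdef
  have hfspec : ∀ e ∈ G.edgeFinset, e = s((f e).1, (f e).2) ∧ (f e).2 ∈ (Bg (g (f e).1)).erase (f e).1 := by
    intro e he
    have hex := horient e he
    simp only [hfdef, dif_pos hex]
    exact hex.choose_spec
  have hmap : ∀ e ∈ G.edgeFinset, f e ∈ t := by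
    intro e he
    obtain ⟨h1, h2⟩ := hfspec e he
    exact Finset.mem_biUnion.mpr ⟨(f e).1, Finset.mem_univ _,
      Finset.mem_product.mpr ⟨Finset.mem_singleton_self _, h2⟩⟩
  have hinj : Set.InjOn f G.edgeFinset := by
    intro e1 he1 e2 he2 hf
    rw [(hfspec e1 he1).1, (hfspec e2 he2).1, hf]
  calc G.edgeFinset.card ≤ t.card := Finset.card_le_card_of_injOn f hmap hinj
    _ ≤ ∑ u, ({u} ×ˢ (Bg (g u)).erase u).card := Finset.card_biUnion_le
    _ = ∑ u, ((Bg (g u)).erase u).card := by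
        refine Finset.sum_congr rfl (fun u _ => ?_)
        rw [Finset.card_product, Finset.card_singleton, one_mul]
    _ ≤ ∑ _u : V, k := by
        refine Finset.sum_le_sum (fun u _ => ?_)
        have h1 := Finset.card_erase_of_mem (hg1 u)
        have h2 := hcard (g u)
        omega
    _ = k * Fintype.card V := by
        simp [Finset.sum_const, smul_eq_mul, mul_comm]

def eIn [Fintype V] [DecidableEq V] (H : SimpleGraph V) [Fintype H.edgeSet]
    (A : Finset V) : ℕ :=
  (H.edgeFinset.filter (fun e => e ∈ A.sym2)).card

lemma eIn_empty [Fintype V] [DecidableEq V] (H : SimpleGraph V) [Fintype H.edgeSet] :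
    eIn H (∅ : Finset V) = 0 := by
  rw [eIn, Finset.card_eq_zero]
  ext e
  simp only [Finset.mem_filter, Finset.notMem_empty, iff_false, not_and]
  intro he hall
  have hall' := Finset.mem_sym2_iff.mp hall
  induction e with
  | _ x y => simpa using hall' x (by simp)

lemma eIn_erase [Fintype V] [DecidableEq V] (H : SimpleGraph V) [Fintype H.edgeSet]
    [DecidableRel H.Adj] (A : Finset V) {v : V} (hv : v ∈ A) :
    eIn H A = eIn H (A.erase v) + ((A.erase v).filter (H.Adj v)).card := by
  have hsplit := Finset.card_filter_add_card_filter_not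
    (s := H.edgeFinset.filter (fun e => e ∈ A.sym2)) (p := fun e => v ∈ e)
  have h1 : (H.edgeFinset.filter (fun e => e ∈ A.sym2)).filter (fun e => ¬ v ∈ e)
      = H.edgeFinset.filter (fun e => e ∈ (A.erase v).sym2) := by
    rw [Finset.filter_filter]
    refine Finset.filter_congr (fun e he => ?_)
    simp only [Finset.mem_sym2_iff]
    constructor
    · rintro ⟨hA, hv'⟩ x hx
      exact Finset.mem_erase.mpr ⟨fun hh => hv' (hh ▸ hx), hA x hx⟩
    · intro hE
      exact ⟨fun x hx => (Finset.mem_erase.mp (hE x hx)).2,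
        fun hvv => (Finset.mem_erase.mp (hE v hvv)).1 rfl⟩
  have h2 : ((H.edgeFinset.filter (fun e => e ∈ A.sym2)).filter (fun e => v ∈ e)).card
      = ((A.erase v).filter (H.Adj v)).card := by
    refine Finset.card_bij' (fun e he => Sym2.Mem.other (Finset.mem_filter.mp he).2)
      (fun u hu => s(v, u)) ?_ ?_ ?_ ?_
    · -- hi
      intro e he
      obtain ⟨he1, hve⟩ := Finset.mem_filter.mp he
      obtain ⟨he2, hall'⟩ := Finset.mem_filter.mp he1
      have hall := Finset.mem_sym2_iff.mp hall'
      have hsp := Sym2.other_spec hve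
      have hadj : H.Adj v (Sym2.Mem.other hve) := by
        rw [← SimpleGraph.mem_edgeSet, hsp]
        exact mem_edgeFinset.mp he2
      refine Finset.mem_filter.mpr ⟨Finset.mem_erase.mpr ⟨hadj.ne', hall _ (Sym2.other_mem hve)⟩, hadj⟩
    · -- hj
      intro u hu
      obtain ⟨hu1, hadj⟩ := Finset.mem_filter.mp hu
      refine Finset.mem_filter.mpr ⟨Finset.mem_filter.mpr ⟨mem_edgeFinset.mpr hadj, ?_⟩, by simp⟩
      rw [Finset.mem_sym2_iff]
      intro x hx
      rcases Sym2.mem_iff.mp hx with rfl | rfl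
      · exact hv
      · exact (Finset.mem_erase.mp hu1).2
    · -- left_inv : j (i e) = e
      intro e he
      exact Sym2.other_spec (Finset.mem_filter.mp he).2
    · -- right_inv : i (j u) = u
      intro u hu
      have : v ∈ s(v, u) := by simp
      exact Sym2.congr_right.mp (Sym2.other_spec _)
  rw [eIn, eIn, ← hsplit, h1, h2]
  ring

lemma eIn_univ [Fintype V] [DecidableEq V] (H : SimpleGraph V) [Fintype H.edgeSet] :
    eIn H (univ : Finset V) = H.edgeFinset.card := by
  rw [eIn]
  rw [Finset.filter_true_of_mem
    (fun e _ => Finset.mem_sym2_iff.mpr (fun x _ => Finset.mem_univ x))]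

lemma reduce [Fintype V] [DecidableEq V] (H : SimpleGraph V) [Fintype H.edgeSet]
    [DecidableRel H.Adj] (δ' : ℝ) (hδ' : 0 ≤ δ') :
    ∀ (A : Finset V), ((2 + δ') * A.card ≤ 2 * eIn H A) → (A.card < eIn H A) →
    ∃ B ⊆ A, B.Nonempty ∧ (∀ v ∈ B, 2 ≤ ((B.erase v).filter (H.Adj v)).card) ∧
      (2 + δ') * B.card ≤ 2 * eIn H B := by
  intro A
  induction A using Finset.strongInduction with
  | _ A ih =>
    intro h1 h2
    by_cases hmin : ∀ v ∈ A, 2 ≤ ((A.erase v).filter (H.Adj v)).card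
    · refine ⟨A, Finset.Subset.refl A, ?_, hmin, h1⟩
      rcases Finset.eq_empty_or_nonempty A with hA | hA
      · exfalso
        rw [hA, eIn_empty] at h2
        simp at h2
      · exact hA
    · push_neg at hmin
      obtain ⟨v, hv, hd⟩ := hmin
      have heq := eIn_erase H A hv
      have hcard := Finset.card_erase_of_mem hv
      have hApos : 1 ≤ A.card := Finset.card_pos.mpr ⟨v, hv⟩
      have hsub : A.erase v ⊂ A := Finset.erase_ssubset hv
      have hd1 : ((A.erase v).filter (H.Adj v)).card ≤ 1 := by omega
      have hstep1 : (2 + δ') * ((A.erase v).card : ℝ) ≤ 2 * (eIn H (A.erase v) : ℝ) := by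
        have hc : ((A.erase v).card : ℝ) = (A.card : ℝ) - 1 := by
          rw [hcard]
          push_cast [Nat.cast_sub hApos]
          ring
        have he' : (eIn H A : ℝ) - 1 ≤ (eIn H (A.erase v) : ℝ) := by
          have hh : eIn H A ≤ eIn H (A.erase v) + 1 := by omega
          have := (Nat.cast_le (α := ℝ)).mpr hh
          push_cast at this
          linarith
        rw [hc]
        nlinarith [h1]
      have hstep2 : (A.erase v).card < eIn H (A.erase v) := by omega
      obtain ⟨B, hBs, hrest⟩ := ih _ hsub hstep1 hstep2
      exact ⟨B, hBs.trans (Finset.erase_subset _ _), hrest⟩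

lemma eIn_eq_induce [Fintype V] [DecidableEq V] (H : SimpleGraph V) [Fintype H.edgeSet]
    (B : Finset V) [Fintype ((H.induce (B : Set V)).edgeSet)] :
    (H.induce (B : Set V)).edgeFinset.card = eIn H B := by
  rw [eIn]
  refine Finset.card_bij (fun e _ => Sym2.map Subtype.val e) ?_ ?_ ?_
  · intro e he
    induction e with
    | _ a b =>
      have hadj : (H.induce (B : Set V)).Adj a b := mem_edgeFinset.mp he
      have hadj' : H.Adj ↑a ↑b := hadj
      refine Finset.mem_filter.mpr ⟨mem_edgeFinset.mpr hadj', ?_⟩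
      rw [Finset.mem_sym2_iff]
      intro x hx
      rw [Sym2.map_pair_eq] at hx
      rcases Sym2.mem_iff.mp hx with rfl | rfl
      · exact a.2
      · exact b.2
  · intro e1 h1 e2 h2 heq
    exact Sym2.map.injective Subtype.val_injective heq
  · intro e he
    obtain ⟨he1, hall'⟩ := Finset.mem_filter.mp he
    have hall := Finset.mem_sym2_iff.mp hall'
    induction e with
    | _ x y =>
      have hadj : H.Adj x y := mem_edgeFinset.mp he1
      have hx : x ∈ B := hall x (by simp)
      have hy : y ∈ B := hall y (by simp)
      refine ⟨s((⟨x, hx⟩ : (B : Set V)), (⟨y, hy⟩ : (B : Set V))), ?_, ?_⟩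
      · exact mem_edgeFinset.mpr (by exact hadj)
      · rw [Sym2.map_pair_eq]

lemma degree_induce [Fintype V] [DecidableEq V] (H : SimpleGraph V) [DecidableRel H.Adj] (B : Finset V)
    (v : (B : Set V)) [Fintype ((H.induce (B : Set V)).neighborSet v)] :
    (H.induce (B : Set V)).degree v = ((B.erase ↑v).filter (H.Adj ↑v)).card := by
  rw [← SimpleGraph.card_neighborFinset_eq_degree]
  refine Finset.card_bij (fun u _ => (u : V)) ?_ ?_ ?_
  · intro u hu
    have hadj : (H.induce (B : Set V)).Adj v u := (mem_neighborFinset _ _ _).mp hu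
    have hadj' : H.Adj ↑v ↑u := hadj
    exact Finset.mem_filter.mpr ⟨Finset.mem_erase.mpr
      ⟨Subtype.coe_injective.ne hadj.ne', u.2⟩, hadj'⟩
  · intro u1 _ u2 _ h
    exact Subtype.coe_injective h
  · intro x hx
    obtain ⟨hx1, hadj⟩ := Finset.mem_filter.mp hx
    have hxB : x ∈ B := (Finset.mem_erase.mp hx1).2
    exact ⟨⟨x, hxB⟩, (mem_neighborFinset _ _ _).mpr (by exact hadj), rfl⟩

lemma exists_long_path {W : Type} [Fintype W] [DecidableEq W] (K : SimpleGraph W)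
    [DecidableRel K.Adj] {r : ℕ} (hg : LongCycles K (r + 2))
    (hdeg2 : ∀ v, 2 ≤ K.degree v) (s : W) :
    ∃ (x : W) (p : K.Walk s x), p.IsPath ∧ p.length = r := by
  suffices h : ∀ t, t ≤ r → ∃ (x : W) (p : K.Walk s x), p.IsPath ∧ p.length = t from
    h r le_rfl
  intro t
  induction t with
  | zero => exact fun _ => ⟨s, Walk.nil, Walk.IsPath.nil, rfl⟩
  | succ t ih =>
    intro hle
    obtain ⟨x, p, hp, hlen⟩ := ih (le_trans (Nat.le_succ t) hle)
    have hcard : 2 ≤ (K.neighborFinset x).card := by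
      rw [SimpleGraph.card_neighborFinset_eq_degree]; exact hdeg2 x
    have hex : ∃ y ∈ K.neighborFinset x, s(x, y) ∉ p.edges := by
      by_contra hcon
      push_neg at hcon
      obtain ⟨a, ha, b, hb, hab⟩ := Finset.one_lt_card.mp (lt_of_lt_of_le one_lt_two hcard)
      exact hab (edges_end_unique p hp (hcon a ha) (hcon b hb))
    obtain ⟨y, hyF, hye⟩ := hex
    have hyadj : K.Adj x y := (mem_neighborFinset _ _ _).mp hyF
    have hynotsup : y ∉ p.support := by
      intro hy
      have hyx : y ≠ x := hyadj.ne'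
      set q := p.dropUntil y hy with hqdef
      have hq : q.IsPath := hp.dropUntil hy
      have hqe : s(x, y) ∉ q.edges := fun hh => hye (Walk.edges_dropUntil_subset p hy hh)
      obtain ⟨c, hc, hcl⟩ := exists_cycle_of_walk hyadj q hqe
      have hlong := hg _ c hc
      have hql : q.length ≤ p.length := Walk.length_dropUntil_le p hy
      omega
    refine ⟨y, p.concat hyadj, ?_, ?_⟩
    · rw [Walk.isPath_def, Walk.support_concat]
      rw [List.nodup_append]
      exact ⟨(Walk.isPath_def p).mp hp, List.nodup_singleton y,
        fun a ha b hb hab => hynotsup (by rw [List.mem_singleton] at hb; rw [← hb, ← hab]; exact ha)⟩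
    · rw [Walk.length_concat, hlen]

lemma main_contra {W : Type} [Fintype W] [DecidableEq W] (K : SimpleGraph W)
    [DecidableRel K.Adj] (k r : ℕ) (δ' : ℝ) (hδ' : 0 < δ') (hne : Nonempty W)
    (hg : LongCycles K (8 * r + 3)) (hdeg2 : ∀ v, 2 ≤ K.degree v)
    (htw : HasTreewidthLE K k)
    (hE : (2 + δ') * (Fintype.card W : ℝ) ≤ 2 * (K.edgeFinset.card : ℝ))
    (hr : 2 * (k : ℝ) ≤ δ' * (r + 1)) : False := by
  classical
  set n := Fintype.card W with hndef
  have hn1 : 1 ≤ n := by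
    haveI := hne
    exact Fintype.card_pos
  set idx : W → ℕ := fun w => ((Fintype.equivFin W) w : ℕ) with hidxdef
  have hidxlt : ∀ w, idx w < n := fun w => ((Fintype.equivFin W) w).is_lt
  have hidxinj : Function.Injective idx := fun a b h =>
    (Fintype.equivFin W).injective (Fin.ext h)
  set key : W → W → ℕ := fun v s => K.dist v s * n + idx s with hkeydef
  have key_le : ∀ {v s t : W}, key v s ≤ key v t → K.dist v s ≤ K.dist v t := by
    intro v s t h
    by_contra hc
    push_neg at hc
    have h1 : (K.dist v t + 1) * n ≤ K.dist v s * n := Nat.mul_le_mul_right n hc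
    rw [add_mul, one_mul] at h1
    have h2 := hidxlt s
    have h3 := hidxlt t
    simp only [hkeydef] at h
    set a := K.dist v s * n
    set b := K.dist v t * n
    omega
  have distle : ∀ {a b c : W}, K.Reachable a b → K.Reachable b c →
      K.dist a c ≤ K.dist a b + K.dist b c := by
    intro a b c h1 h2
    obtain ⟨p, hp⟩ := h1.exists_walk_length_eq_dist
    obtain ⟨q, hq⟩ := h2.exists_walk_length_eq_dist
    have := SimpleGraph.dist_le (p.append q)
    rwa [Walk.length_append, hp, hq] at this
  set Near : W → W → Prop := fun u v => K.Reachable u v ∧ K.dist u v ≤ 2 * r with hNeardef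
  set P : Finset W → Prop := fun s => ∀ u ∈ s, ∀ v ∈ s, u ≠ v → ¬ Near u v with hPdef
  have hPne : ((univ : Finset (Finset W)).filter P).Nonempty := by
    refine ⟨∅, Finset.mem_filter.mpr ⟨Finset.mem_univ _, ?_⟩⟩
    intro u hu
    exact absurd hu (Finset.notMem_empty u)
  obtain ⟨S, hSmem, hSmax⟩ := Finset.exists_max_image _ Finset.card hPne
  have hSP : ∀ u ∈ S, ∀ v ∈ S, u ≠ v → ¬ Near u v := (Finset.mem_filter.mp hSmem).2
  have hnear : ∀ v : W, ∃ s ∈ S, Near v s := by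
    intro v
    by_contra hcon
    push_neg at hcon
    have hvS : v ∉ S := fun hv => (hcon v hv) ⟨Reachable.refl v, by rw [SimpleGraph.dist_self]; exact Nat.zero_le _⟩
    have hins : P (insert v S) := by
      intro a ha b hb hab
      rcases Finset.mem_insert.mp ha with rfl | ha' <;>
        rcases Finset.mem_insert.mp hb with rfl | hb'
      · exact absurd rfl hab
      · exact fun hN => hcon b hb' hN
      · intro hN
        exact hcon a ha' ⟨hN.1.symm, by rw [SimpleGraph.dist_comm]; exact hN.2⟩
      · exact hSP a ha' b hb' hab
    have hmem : insert v S ∈ (univ : Finset (Finset W)).filter P :=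
      Finset.mem_filter.mpr ⟨Finset.mem_univ _, hins⟩
    have := hSmax _ hmem
    rw [Finset.card_insert_of_notMem hvS] at this
    omega
  have hσex : ∀ v : W, ∃ s, (s ∈ S ∧ K.Reachable v s) ∧
      ∀ t ∈ S.filter (fun s => K.Reachable v s), key v s ≤ key v t := by
    intro v
    obtain ⟨s0, hs0S, hs0⟩ := hnear v
    have hne' : (S.filter (fun s => K.Reachable v s)).Nonempty :=
      ⟨s0, Finset.mem_filter.mpr ⟨hs0S, hs0.1⟩⟩
    obtain ⟨s, hsmem, hsmin⟩ := Finset.exists_min_image _ (key v) hne'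
    obtain ⟨h1, h2⟩ := Finset.mem_filter.mp hsmem
    exact ⟨s, ⟨h1, h2⟩, hsmin⟩
  choose σ hσm using hσex
  have hσS : ∀ v, σ v ∈ S := fun v => (hσm v).1.1
  have hσR : ∀ v, K.Reachable v (σ v) := fun v => (hσm v).1.2
  have hσmin : ∀ v t, t ∈ S → K.Reachable v t → key v (σ v) ≤ key v t := fun v t h1 h2 =>
    (hσm v).2 t (Finset.mem_filter.mpr ⟨h1, h2⟩)
  have hσd : ∀ v t, t ∈ S → K.Reachable v t → K.dist v (σ v) ≤ K.dist v t := fun v t h1 h2 =>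
    key_le (hσmin v t h1 h2)
  have hσ2r : ∀ v, K.dist v (σ v) ≤ 2 * r := by
    intro v
    obtain ⟨s0, hs0S, hs0⟩ := hnear v
    exact le_trans (hσd v s0 hs0S hs0.1) hs0.2
  have hfix : ∀ s ∈ S, σ s = s := by
    intro s hs
    have h1 : key s (σ s) ≤ key s s := hσmin s s hs (Reachable.refl s)
    have h2 : K.dist s (σ s) ≤ K.dist s s := key_le h1
    rw [SimpleGraph.dist_self] at h2
    exact ((hσR s).dist_eq_zero_iff.mp (Nat.le_zero.mp h2)).symm
  have hball : ∀ s ∈ S, ∀ v, K.Reachable s v → K.dist s v ≤ r → σ v = s := by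
    intro s hs v h1 h2
    have h2' : K.dist v s ≤ r := by rwa [SimpleGraph.dist_comm]
    have hvS : K.dist v (σ v) ≤ r := le_trans (hσd v s hs h1.symm) h2'
    by_contra hne'
    have hN : Near s (σ v) := by
      refine ⟨h1.trans (hσR v), ?_⟩
      calc K.dist s (σ v) ≤ K.dist s v + K.dist v (σ v) := distle h1 (hσR v)
        _ ≤ r + r := add_le_add h2 hvS
        _ ≤ 2 * r := by omega
    exact hSP s hs (σ v) (hσS v) (fun hh => hne' hh.symm) hN
  -- parent step
  have hparent : ∀ v, σ v ≠ v →
      ∃ u, K.Adj v u ∧ K.dist u (σ v) + 1 = K.dist v (σ v) ∧ σ u = σ v := by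
    intro v hvne
    have hd0 : K.dist v (σ v) ≠ 0 := fun h0 => hvne ((hσR v).dist_eq_zero_iff.mp h0).symm
    obtain ⟨p, hpp, hpl⟩ := (hσR v).exists_path_of_dist
    have hvne' : v ≠ σ v := fun hh => hvne hh.symm
    obtain ⟨u, hadj, q, rfl⟩ := Walk.exists_eq_cons_of_ne hvne' p
    · have hql : q.length + 1 = K.dist v (σ v) := by simpa using hpl
      have hqr : K.Reachable u (σ v) := q.reachable
      have hdu_le : K.dist u (σ v) ≤ q.length := SimpleGraph.dist_le q
      have hdv_le : K.dist v (σ v) ≤ K.dist u (σ v) + 1 := by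
        obtain ⟨w, hw⟩ := hqr.exists_walk_length_eq_dist
        have h := SimpleGraph.dist_le (Walk.cons hadj w)
        rw [Walk.length_cons, hw] at h
        omega
      have hdu : K.dist u (σ v) + 1 = K.dist v (σ v) := by omega
      refine ⟨u, hadj, hdu, ?_⟩
      have hA_le : K.dist u (σ u) ≤ K.dist u (σ v) := hσd u (σ v) (hσS v) hqr
      have hvreach : K.Reachable v (σ u) := (hadj.reachable).trans (hσR u)
      have hCle : K.dist v (σ u) ≤ K.dist u (σ u) + 1 := by
        obtain ⟨w, hw⟩ := (hσR u).exists_walk_length_eq_dist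
        have h := SimpleGraph.dist_le (Walk.cons hadj w)
        rw [Walk.length_cons, hw] at h
        omega
      have hDge : K.dist v (σ v) ≤ K.dist v (σ u) := key_le (hσmin v (σ u) (hσS u) hvreach)
      have hd_eq1 : K.dist u (σ u) = K.dist u (σ v) := by omega
      have hd_eq2 : K.dist v (σ u) = K.dist v (σ v) := by omega
      have hk1 : key u (σ u) ≤ key u (σ v) := hσmin u (σ v) (hσS v) hqr
      have hk2 : key v (σ v) ≤ key v (σ u) := hσmin v (σ u) (hσS u) hvreach
      have hi1 : idx (σ u) ≤ idx (σ v) := by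
        simp only [hkeydef] at hk1
        rw [hd_eq1] at hk1
        exact le_of_add_le_add_left hk1
      have hi2 : idx (σ v) ≤ idx (σ u) := by
        simp only [hkeydef] at hk2
        rw [hd_eq2] at hk2
        exact le_of_add_le_add_left hk2
      exact hidxinj (le_antisymm hi1 hi2)
  have hparchoice : ∀ v, ∃ u, σ v ≠ v →
      (K.Adj v u ∧ K.dist u (σ v) + 1 = K.dist v (σ v) ∧ σ u = σ v) := by
    intro v
    by_cases h : σ v ≠ v
    · obtain ⟨u, hu⟩ := hparent v h
      exact ⟨u, fun _ => hu⟩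
    · exact ⟨v, fun hc => absurd hc h⟩
  choose par hpar using hparchoice
  -- walk to the center along parent edges
  have hwalkC : ∀ (D : ℕ) (v : W), K.dist v (σ v) = D →
      ∃ p : K.Walk v (σ v), (∀ x ∈ p.support, σ x = σ v) ∧
        (∀ e ∈ p.edges, ∃ x, σ x ≠ x ∧ e = s(x, par x)) ∧ p.length = D := by
    intro D
    induction D with
    | zero =>
      intro v hv
      have hveq : v = σ v := (hσR v).dist_eq_zero_iff.mp hv
      refine ⟨(Walk.nil : K.Walk v v).copy rfl hveq, ?_, ?_, ?_⟩
      · intro x hx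
        rw [Walk.support_copy] at hx
        simp only [Walk.support_nil, List.mem_singleton] at hx
        subst hx
        rfl
      · intro e he
        rw [Walk.edges_copy] at he
        simp at he
      · simp
    | succ D ih =>
      intro v hv
      have hvne : σ v ≠ v := by
        intro h
        rw [h, SimpleGraph.dist_self] at hv
        omega
      obtain ⟨hadj, hdist, hσeq⟩ := hpar v hvne
      have hdpu : K.dist (par v) (σ (par v)) = D := by rw [hσeq]; omega
      obtain ⟨p', hp1, hp2, hp3⟩ := ih (par v) hdpu
      refine ⟨Walk.cons hadj (p'.copy rfl hσeq), ?_, ?_, ?_⟩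
      · intro x hx
        rw [Walk.support_cons] at hx
        rcases List.mem_cons.mp hx with rfl | hx'
        · rfl
        · rw [Walk.support_copy] at hx'
          rw [← hσeq]
          exact hp1 x hx'
      · intro e he
        rw [Walk.edges_cons] at he
        rcases List.mem_cons.mp he with rfl | he'
        · exact ⟨v, hvne, rfl⟩
        · rw [Walk.edges_copy] at he'
          exact hp2 e he'
      · rw [Walk.length_cons, Walk.length_copy, hp3]
  have hcw : ∀ v, ∃ p : K.Walk v (σ v), (∀ x ∈ p.support, σ x = σ v) ∧
      (∀ e ∈ p.edges, ∃ x, σ x ≠ x ∧ e = s(x, par x)) ∧ p.length ≤ 2 * r := by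
    intro v
    obtain ⟨p, h1, h2, h3⟩ := hwalkC _ v rfl
    exact ⟨p, h1, h2, by rw [h3]; exact hσ2r v⟩
  choose pw hpw1 hpw2 hpw3 using hcw
  -- the contracted graph
  set σ' : W → {x // x ∈ S} := fun v => ⟨σ v, hσS v⟩ with hσ'def
  set M : SimpleGraph {x // x ∈ S} :=
    SimpleGraph.fromRel (fun s t => ∃ u v, K.Adj u v ∧ σ' u = s ∧ σ' v = t) with hMdef
  letI : DecidableRel M.Adj := Classical.decRel _
  have htwM : HasTreewidthLE M k := by
    refine tw_minor K M k (fun v => some (σ' v)) ?_ ?_ ?_ htw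
    · intro s
      refine ⟨s.1, ?_⟩
      exact congrArg some (Subtype.ext (hfix s.1 s.2))
    · intro s u v hu hv
      simp only [Option.some_inj] at hu hv
      have huv : σ u = σ v := by
        have h1 : (σ' u : W) = (σ' v : W) := by rw [hu, hv]
        exact h1
      refine ⟨(pw u).append ((pw v).reverse.copy huv.symm rfl), ?_⟩
      intro x hx
      rcases (Walk.mem_support_append_iff _ _).mp hx with h1 | h2
      · have : σ x = σ u := hpw1 u x h1
        simp only [Option.some_inj]
        rw [← hu]
        exact Subtype.ext this
      · rw [Walk.support_copy, Walk.support_reverse, List.mem_reverse] at h2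
        have : σ x = σ v := hpw1 v x h2
        simp only [Option.some_inj]
        rw [← hv]
        exact Subtype.ext this
    · intro s t hst
      rw [SimpleGraph.fromRel_adj] at hst
      obtain ⟨hne', h⟩ := hst
      rcases h with ⟨u, v, h1, h2, h3⟩ | ⟨u, v, h1, h2, h3⟩
      · exact ⟨u, v, h1, congrArg some h2, congrArg some h3⟩
      · exact ⟨v, u, h1.symm, congrArg some h3, congrArg some h2⟩
  have heM : M.edgeFinset.card ≤ k * S.card := by
    have h := tw_card_edges M htwM
    rwa [Fintype.card_coe] at h
  -- vertices which are not centers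
  set Dset : Finset W := univ.filter (fun v => ¬ σ v = v) with hDdef
  have hDcard : S.card + Dset.card = n := by
    have h1 : univ.filter (fun v => σ v = v) = S := by
      ext v
      simp only [Finset.mem_filter, Finset.mem_univ, true_and]
      constructor
      · intro h; rw [← h]; exact hσS v
      · intro h; exact hfix v h
    have h2 := Finset.card_filter_add_card_filter_not
      (s := (univ : Finset W)) (p := fun v => σ v = v)
    rw [h1, Finset.card_univ] at h2
    rw [hDdef]
    exact h2
  -- intra-cell edges are parent edges
  have hintra : (K.edgeFinset.filter (fun e => (Sym2.map σ e).IsDiag))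
      ⊆ Dset.image (fun v => s(v, par v)) := by
    intro e he
    obtain ⟨heE, heD⟩ := Finset.mem_filter.mp he
    revert heE heD
    refine Sym2.ind (fun u v => ?_) e
    intro heE heD
    have hadj : K.Adj u v := (K.mem_edgeSet).mp (mem_edgeFinset.mp heE)
    have hσuv : σ u = σ v := by
      rw [Sym2.map_pair_eq, Sym2.mk_isDiag_iff] at heD
      exact heD
    by_cases hc1 : ¬ σ u = u ∧ v = par u
    · refine Finset.mem_image.mpr ⟨u, Finset.mem_filter.mpr ⟨Finset.mem_univ _, hc1.1⟩, ?_⟩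
      rw [← hc1.2]
    by_cases hc2 : ¬ σ v = v ∧ u = par v
    · refine Finset.mem_image.mpr ⟨v, Finset.mem_filter.mpr ⟨Finset.mem_univ _, hc2.1⟩, ?_⟩
      rw [← hc2.2, Sym2.eq_swap]
    exfalso
    set q : K.Walk v u := (pw v).append ((pw u).reverse.copy hσuv rfl) with hqdef
    have hql : q.length ≤ 4 * r := by
      rw [hqdef, Walk.length_append, Walk.length_copy, Walk.length_reverse]
      have h1 := hpw3 u
      have h2 := hpw3 v
      omega
    have hqe : s(u, v) ∉ q.edges := by
      intro hmem
      rw [hqdef, Walk.edges_append] at hmem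
      have hcases : ∃ x, σ x ≠ x ∧ s(u, v) = s(x, par x) := by
        rcases List.mem_append.mp hmem with hm | hm
        · exact hpw2 v _ hm
        · rw [Walk.edges_copy, Walk.edges_reverse, List.mem_reverse] at hm
          exact hpw2 u _ hm
      obtain ⟨x, hx1, hx2⟩ := hcases
      rw [Sym2.eq_iff] at hx2
      rcases hx2 with ⟨rfl, rfl⟩ | ⟨h5, rfl⟩
      · exact hc1 ⟨hx1, rfl⟩
      · exact hc2 ⟨hx1, h5⟩
    obtain ⟨c, hc, hcl⟩ := exists_cycle_of_walk hadj q hqe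
    have := hg _ c hc
    omega
  have hia : (K.edgeFinset.filter (fun e => (Sym2.map σ e).IsDiag)).card ≤ Dset.card :=
    le_trans (Finset.card_le_card hintra) Finset.card_image_le
  -- crossing edges inject into edges of M
  have hcrossinj : ∀ u₁ v₁ u₂ v₂ : W, K.Adj u₁ v₁ → K.Adj u₂ v₂ → σ u₁ = σ u₂ →
      σ v₁ = σ v₂ → ¬ σ u₁ = σ v₁ → ¬ s(u₁, v₁) = s(u₂, v₂) → False := by
    intro u₁ v₁ u₂ v₂ h1 h2 hu hv hne12 hne'
    have hpe : ∀ x, σ x ≠ x → s(u₁, v₁) = s(x, par x) → False := by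
      intro x hx heq
      have hσpx : σ (par x) = σ x := (hpar x hx).2.2
      rw [Sym2.eq_iff] at heq
      rcases heq with ⟨rfl, rfl⟩ | ⟨rfl, rfl⟩
      · exact hne12 hσpx.symm
      · exact hne12 hσpx
    set D : K.Walk u₂ u₁ := (pw u₂).append ((pw u₁).reverse.copy hu rfl) with hDdef2
    set q : K.Walk v₁ u₁ :=
      (pw v₁).append (((pw v₂).reverse.copy hv.symm rfl).append (Walk.cons h2.symm D))
      with hqdef
    have hql : q.length ≤ 8 * r + 1 := by
      rw [hqdef, hDdef2]
      simp only [Walk.length_append, Walk.length_copy, Walk.length_reverse, Walk.length_cons]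
      have h3 := hpw3 u₁
      have h4 := hpw3 u₂
      have h5 := hpw3 v₁
      have h6 := hpw3 v₂
      omega
    have hqe : s(u₁, v₁) ∉ q.edges := by
      intro hmem
      rw [hqdef, Walk.edges_append, List.mem_append] at hmem
      rcases hmem with hm | hmem
      · obtain ⟨x, hx1, hx2⟩ := hpw2 v₁ _ hm
        exact hpe x hx1 hx2
      rw [Walk.edges_append, List.mem_append] at hmem
      rcases hmem with hm | hmem
      · rw [Walk.edges_copy, Walk.edges_reverse, List.mem_reverse] at hm
        obtain ⟨x, hx1, hx2⟩ := hpw2 v₂ _ hm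
        exact hpe x hx1 hx2
      rw [Walk.edges_cons, List.mem_cons] at hmem
      rcases hmem with hm | hmem
      · exact hne' (by rw [hm, Sym2.eq_swap])
      rw [hDdef2, Walk.edges_append, List.mem_append] at hmem
      rcases hmem with hm | hm
      · obtain ⟨x, hx1, hx2⟩ := hpw2 u₂ _ hm
        exact hpe x hx1 hx2
      · rw [Walk.edges_copy, Walk.edges_reverse, List.mem_reverse] at hm
        obtain ⟨x, hx1, hx2⟩ := hpw2 u₁ _ hm
        exact hpe x hx1 hx2
    obtain ⟨c, hc, hcl⟩ := exists_cycle_of_walk h1 q hqe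
    have := hg _ c hc
    omega
  have hcr : (K.edgeFinset.filter (fun e => ¬ (Sym2.map σ e).IsDiag)).card
      ≤ M.edgeFinset.card := by
    have hmapsto : ∀ e ∈ K.edgeFinset.filter (fun e => ¬ (Sym2.map σ e).IsDiag),
        Sym2.map σ' e ∈ M.edgeFinset := by
      intro e he
      obtain ⟨heE, heD⟩ := Finset.mem_filter.mp he
      revert heE heD
      refine Sym2.ind (fun u v => ?_) e
      intro heE heD
      have hadj : K.Adj u v := (K.mem_edgeSet).mp (mem_edgeFinset.mp heE)
      have hσuv : ¬ σ u = σ v := by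
        rw [Sym2.map_pair_eq, Sym2.mk_isDiag_iff] at heD
        exact heD
      rw [Sym2.map_pair_eq, mem_edgeFinset, SimpleGraph.mem_edgeSet, hMdef,
        SimpleGraph.fromRel_adj]
      exact ⟨fun hh => hσuv (congrArg Subtype.val hh), Or.inl ⟨u, v, hadj, rfl, rfl⟩⟩
    have hinj2 : ∀ e1 ∈ K.edgeFinset.filter (fun e => ¬ (Sym2.map σ e).IsDiag),
        ∀ e2 ∈ K.edgeFinset.filter (fun e => ¬ (Sym2.map σ e).IsDiag),
        Sym2.map σ' e1 = Sym2.map σ' e2 → e1 = e2 := by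
      intro e1
      refine Sym2.ind (fun u₁ v₁ => ?_) e1
      intro h1m e2
      refine Sym2.ind (fun u₂ v₂ => ?_) e2
      intro h2m heq
      obtain ⟨h1E, h1D⟩ := Finset.mem_filter.mp h1m
      obtain ⟨h2E, h2D⟩ := Finset.mem_filter.mp h2m
      have hadj1 : K.Adj u₁ v₁ := (K.mem_edgeSet).mp (mem_edgeFinset.mp h1E)
      have hadj2 : K.Adj u₂ v₂ := (K.mem_edgeSet).mp (mem_edgeFinset.mp h2E)
      have hσ1 : ¬ σ u₁ = σ v₁ := by
        rw [Sym2.map_pair_eq, Sym2.mk_isDiag_iff] at h1D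
        exact h1D
      rw [Sym2.map_pair_eq, Sym2.map_pair_eq, Sym2.eq_iff] at heq
      by_contra hne'
      rcases heq with ⟨ha, hb⟩ | ⟨ha, hb⟩
      · exact hcrossinj u₁ v₁ u₂ v₂ hadj1 hadj2 (congrArg Subtype.val ha)
          (congrArg Subtype.val hb) hσ1 hne'
      · refine hcrossinj u₁ v₁ v₂ u₂ hadj1 hadj2.symm (congrArg Subtype.val ha)
          (congrArg Subtype.val hb) hσ1 ?_
        intro hh
        exact hne' (by rw [hh, Sym2.eq_swap])
    exact Finset.card_le_card_of_injOn (Sym2.map σ') hmapsto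
      (fun e1 he1 e2 he2 heq => hinj2 e1 he1 e2 he2 heq)
  have hsplitE := Finset.card_filter_add_card_filter_not
    (s := K.edgeFinset) (p := fun e => (Sym2.map σ e).IsDiag)
  -- lower bound on cell sizes
  have hSsize : S.card * (r + 1) ≤ n := by
    have hcell : ∀ s ∈ S, r + 1 ≤ (univ.filter (fun v => σ v = s)).card := by
      intro s hs
      have hg' : LongCycles K (r + 2) := fun a w hw => le_trans (by omega) (hg a w hw)
      obtain ⟨x, p, hp, hpl⟩ := exists_long_path K hg' hdeg2 s
      have hsub : p.support.toFinset ⊆ univ.filter (fun v => σ v = s) := by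
        intro y hy
        rw [List.mem_toFinset] at hy
        have hre : K.Reachable s y := (p.takeUntil y hy).reachable
        have hdist : K.dist s y ≤ r := by
          have h1 := SimpleGraph.dist_le (p.takeUntil y hy)
          have h2 := Walk.length_takeUntil_le p hy
          omega
        exact Finset.mem_filter.mpr ⟨Finset.mem_univ _, hball s hs y hre hdist⟩
      have hcard2 : p.support.toFinset.card = r + 1 := by
        rw [List.toFinset_card_of_nodup ((Walk.isPath_def p).mp hp),
          Walk.length_support, hpl]
      rw [← hcard2]
      exact Finset.card_le_card hsub
    have hdisj : ∀ s ∈ S, ∀ t ∈ S, s ≠ t →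
        Disjoint (univ.filter (fun v => σ v = s)) (univ.filter (fun v => σ v = t)) := by
      intro s _ t _ hst
      rw [Finset.disjoint_left]
      intro a ha hb
      exact hst ((Finset.mem_filter.mp ha).2 ▸ (Finset.mem_filter.mp hb).2.symm ▸ rfl)
    calc S.card * (r + 1) = ∑ _s ∈ S, (r + 1) := by rw [Finset.sum_const, smul_eq_mul]
      _ ≤ ∑ s ∈ S, (univ.filter (fun v => σ v = s)).card := Finset.sum_le_sum hcell
      _ = (S.biUnion (fun s => univ.filter (fun v => σ v = s))).card :=
          (Finset.card_biUnion hdisj).symm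
      _ ≤ (univ : Finset W).card := Finset.card_le_card (Finset.subset_univ _)
      _ = n := Finset.card_univ
  -- final arithmetic
  have f1 : K.edgeFinset.card + S.card ≤ M.edgeFinset.card + n := by omega
  have f5 : 1 ≤ S.card := by
    obtain ⟨w⟩ := hne
    exact Finset.card_pos.mpr ⟨σ w, hσS w⟩
  have c1 : ((K.edgeFinset.card : ℝ)) + S.card ≤ (M.edgeFinset.card : ℝ) + n := by
    exact_mod_cast f1
  have c2 : (M.edgeFinset.card : ℝ) ≤ k * S.card := by exact_mod_cast heM
  have c3 : (S.card : ℝ) * (r + 1) ≤ n := by exact_mod_cast hSsize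
  have c5 : (1 : ℝ) ≤ S.card := by exact_mod_cast f5
  have e1 : δ' * n + 2 * (S.card : ℝ) ≤ 2 * k * S.card := by nlinarith [hE, c1, c2]
  have e2 : 2 * (k : ℝ) * S.card ≤ δ' * (r + 1) * S.card := by nlinarith [hr, c5]
  have e3 : δ' * (r + 1) * S.card ≤ δ' * n := by nlinarith [c3, hδ']
  nlinarith [e1, e2, e3, c5]

end Stmt17

open Stmt17 in
set_option maxHeartbeats 2000000 in
/-- Any class of graphs with unbounded girth and average degree at least
`2 + δ` is not fractionally-treewidth-fragile. -/
theorem stmt_17 (δ : ℝ) (hδ : 0 < δ) {I : Type} (Vty : I → Type)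
    [∀ i, Fintype (Vty i)] [∀ i, DecidableEq (Vty i)]
    (Gr : ∀ i, SimpleGraph (Vty i))
    (hgirth : ∀ n : ℕ, ∃ i, (n : ℕ∞) ≤ (Gr i).girth)
    (hdeg : ∀ i,
      (2 + δ) * (Fintype.card (Vty i) : ℝ) ≤ 2 * ((Gr i).edgeSet.ncard : ℝ)) :
    ¬ (∀ ε : ℚ, 0 < ε → ∃ k : ℕ, ∀ i, ∀ w : Sym2 (Vty i) → ℚ,
        (∀ e, 0 ≤ w e) →
        ∃ F : Set (Sym2 (Vty i)), F ⊆ (Gr i).edgeSet ∧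
          (∑ᶠ e ∈ F, w e) ≤ ε * (∑ᶠ e ∈ (Gr i).edgeSet, w e) ∧
          HasTreewidthLE ((Gr i).deleteEdges F) k) := by
  intro hfrag
  -- choose a rational ε below δ/(2(2+δ))
  obtain ⟨ε, hε1, hε2⟩ := exists_rat_btwn (show (0 : ℝ) < δ / (2 * (2 + δ)) by positivity)
  have hε0 : 0 < ε := by exact_mod_cast hε1
  obtain ⟨k, hk⟩ := hfrag ε hε0
  set r : ℕ := ⌈4 * (k : ℝ) / δ⌉₊ with hrdef
  obtain ⟨i, hgi⟩ := hgirth (8 * r + 3)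
  classical
  have hLC : LongCycles (Gr i) (8 * r + 3) := longCycles_of_girth hgi
  obtain ⟨F, hFsub, hFw, hFtw⟩ := hk i (fun _ => (1 : ℚ)) (fun _ => zero_le_one)
  -- the graph is nonempty
  have hNA : ¬ (Gr i).IsAcyclic := by
    intro h
    rw [SimpleGraph.girth_eq_zero.mpr h] at hgi
    have : (8 * r + 3 : ℕ) ≤ 0 := by exact_mod_cast hgi
    omega
  obtain ⟨a, -, -, -⟩ := SimpleGraph.exists_girth_eq_length.mpr hNA
  have hn1 : 1 ≤ Fintype.card (Vty i) := Fintype.card_pos_iff.mpr ⟨a⟩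
  -- edge counts
  have hEfin : (Gr i).edgeSet.Finite := Set.toFinite _
  have hFfin : F.Finite := hEfin.subset hFsub
  set m := (Gr i).edgeSet.ncard with hmdef
  have hsum1 : (∑ᶠ e ∈ F, (1 : ℚ)) = (F.ncard : ℚ) := by
    rw [← hFfin.coe_toFinset, finsum_mem_coe_finset, Finset.sum_const, nsmul_eq_mul, mul_one,
      Set.ncard_coe_finset]
  have hsum2 : (∑ᶠ e ∈ (Gr i).edgeSet, (1 : ℚ)) = (m : ℚ) := by
    rw [← hEfin.coe_toFinset, finsum_mem_coe_finset, Finset.sum_const, nsmul_eq_mul, mul_one,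
      hmdef, Set.ncard_eq_toFinset_card _ hEfin]
  have hFw2 : (F.ncard : ℚ) ≤ ε * (m : ℚ) := by
    rw [← hsum1, ← hsum2]
    exact hFw
  have hFR : (F.ncard : ℝ) ≤ (ε : ℝ) * m := by exact_mod_cast hFw2
  have hFlem : F.ncard ≤ m := Set.ncard_le_ncard hFsub hEfin
  have hdeg' := hdeg i
  -- the graph after deleting F
  set H := (Gr i).deleteEdges F with hHdef
  letI : DecidableRel H.Adj := Classical.decRel _
  have hHset : H.edgeSet = (Gr i).edgeSet \ F := SimpleGraph.edgeSet_deleteEdges F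
  have hHcard : H.edgeFinset.card = m - F.ncard := by
    rw [← Set.ncard_coe_finset, SimpleGraph.coe_edgeFinset, hHset, Set.ncard_diff hFsub hFfin]
  have hHcardR : (H.edgeFinset.card : ℝ) = (m : ℝ) - F.ncard := by
    rw [hHcard]
    exact Nat.cast_sub hFlem
  have hmR : (0:ℝ) ≤ (m:ℝ) := Nat.cast_nonneg m
  have hε2' : (ε : ℝ) * (2 + δ) ≤ δ / 2 := by
    rw [lt_div_iff₀ (by positivity : (0:ℝ) < 2 * (2 + δ))] at hε2
    nlinarith
  have hεle1 : (ε : ℝ) ≤ 1 := by nlinarith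
  have hHge : (2 + δ / 2) * (Fintype.card (Vty i) : ℝ) ≤ 2 * (H.edgeFinset.card : ℝ) := by
    rw [hHcardR]
    have h2 : (1 - (ε:ℝ)) * ((2 + δ) * (Fintype.card (Vty i) : ℝ)) ≤ (1 - (ε:ℝ)) * (2 * m) := by
      apply mul_le_mul_of_nonneg_left hdeg' (by linarith)
    have hcard0 : (1:ℝ) ≤ (Fintype.card (Vty i) : ℝ) := by exact_mod_cast hn1
    nlinarith
  have hHgt : Fintype.card (Vty i) < H.edgeFinset.card := by
    have hcard0 : (1:ℝ) ≤ (Fintype.card (Vty i) : ℝ) := by exact_mod_cast hn1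
    have : (Fintype.card (Vty i) : ℝ) < (H.edgeFinset.card : ℝ) := by nlinarith
    exact_mod_cast this
  -- reduce to min degree 2
  have hred1 : (2 + δ / 2) * ((univ : Finset (Vty i)).card : ℝ) ≤ 2 * eIn H univ := by
    rw [eIn_univ, Finset.card_univ]
    exact hHge
  have hred2 : (univ : Finset (Vty i)).card < eIn H univ := by
    rw [eIn_univ, Finset.card_univ]
    exact hHgt
  obtain ⟨B, -, hBne, hBdeg, hBE⟩ := reduce H (δ / 2) (by positivity) univ hred1 hred2
  -- induced graph on B
  set K := H.induce (B : Set (Vty i)) with hKdef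
  letI : DecidableRel K.Adj := Classical.decRel _
  have hKcardV : Fintype.card ((B : Set (Vty i))) = B.card := by
    rw [← Set.toFinset_card, Finset.toFinset_coe]
  have hKedge : K.edgeFinset.card = eIn H B := eIn_eq_induce H B
  have hKdeg : ∀ v : ((B : Set (Vty i))), 2 ≤ K.degree v := by
    intro v
    rw [degree_induce H B v]
    exact hBdeg v.1 (Finset.mem_coe.mp v.2)
  have hKlc : LongCycles K (8 * r + 3) :=
    longCycles_induce (longCycles_deleteEdges hLC F) _
  have hKne : Nonempty ((B : Set (Vty i))) := by
    obtain ⟨x, hx⟩ := hBne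
    exact ⟨⟨x, Finset.mem_coe.mpr hx⟩⟩
  have hKtw : HasTreewidthLE K k := by
    refine tw_minor H K k
      (fun v => if h : v ∈ B then some ⟨v, Finset.mem_coe.mpr h⟩ else none) ?_ ?_ ?_ hFtw
    · intro s
      have hs : (s : Vty i) ∈ B := Finset.mem_coe.mp s.2
      exact ⟨s.1, by simp only [dif_pos hs, Subtype.coe_eta]⟩
    · intro s u v hu hv
      have hu' : u = (s : Vty i) := by
        by_cases h : u ∈ B
        · simp only [dif_pos h, Option.some_inj] at hu
          exact congrArg Subtype.val hu
        · simp only [dif_neg h] at hu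
          exact (Option.some_ne_none _ hu.symm).elim
      have hv' : v = (s : Vty i) := by
        by_cases h : v ∈ B
        · simp only [dif_pos h, Option.some_inj] at hv
          exact congrArg Subtype.val hv
        · simp only [dif_neg h] at hv
          exact (Option.some_ne_none _ hv.symm).elim
      subst hu'
      subst hv'
      refine ⟨Walk.nil, ?_⟩
      intro x hx
      simp only [Walk.support_nil, List.mem_singleton] at hx
      subst hx
      exact hu
    · intro s t hst
      have hs : (s : Vty i) ∈ B := Finset.mem_coe.mp s.2
      have ht : (t : Vty i) ∈ B := Finset.mem_coe.mp t.2
      exact ⟨(s : Vty i), (t : Vty i), hst, by simp only [dif_pos hs, Subtype.coe_eta],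
        by simp only [dif_pos ht, Subtype.coe_eta]⟩
  -- apply the main contradiction
  have hE2 : (2 + δ / 2) * (Fintype.card ((B : Set (Vty i))) : ℝ)
      ≤ 2 * (K.edgeFinset.card : ℝ) := by
    rw [hKcardV, hKedge]
    exact_mod_cast hBE
  have hrr : 2 * (k : ℝ) ≤ (δ / 2) * (r + 1) := by
    have h1 : (4 * (k : ℝ) / δ) ≤ r := Nat.le_ceil _
    rw [div_le_iff₀ hδ] at h1
    linarith
  exact main_contra K k r (δ / 2) (by positivity) hKne hKlc hKdeg hKtw hE2 hrr
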